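/- Let M be a commutative monoid and φ : ℕ → M a monoid homomorphism with x = φ(1). If x is quasi-invertible (for every y ≠ 1 in M there exists y' with y' * x = y) and quasi-absorbing (for every y in M there exist n, m with y * x^n = x^m), then φ is an epimorphism in the category of monoids. -/
import Mathlib


theorem stmt_8 {M : Type*} [CommMonoid M] (φ : Multiplicative ℕ →* M)
    (x : M) (hx : x = φ (Multiplicative.ofAdd 1))
    (hqinv : ∀ y : M, y ≠ 1 → ∃ y' : M, y' * x = y)
    (hqabs : ∀ y : M, ∃ n m : ℕ, y * x ^ n = x ^ m) :
    ∀ (M' : Type*) [Monoid M'] (f g : M →* M'),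
      f.comp φ = g.comp φ → f = g := by
  intro M' _ f g h
  have hfg : ∀ a, f (φ a) = g (φ a) := fun a => DFunLike.congr_fun h a
  have hpow : ∀ k : ℕ, f (x ^ k) = g (x ^ k) := by
    intro k
    have hk : x ^ k = φ (Multiplicative.ofAdd 1 ^ k) := by
      rw [map_pow, hx]
    rw [hk, hfg]
  ext y
  have hdvd : ∀ mm : ℕ, (∃ j, y = x ^ j) ∨ (∃ z, y = z * x ^ mm) := by
    intro mm
    induction mm with
    | zero => right; exact ⟨y, by simp⟩
    | succ k ih =>
      rcases ih with ⟨j, hj⟩ | ⟨z, hz⟩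
      · left; exact ⟨j, hj⟩
      · by_cases hz1 : z = 1
        · left; exact ⟨k, by simp [hz, hz1]⟩
        · obtain ⟨z', hz'⟩ := hqinv z hz1
          right
          refine ⟨z', ?_⟩
          rw [hz, ← hz', pow_succ, mul_assoc, mul_comm x (x ^ k)]
  obtain ⟨n, m, habs⟩ := hqabs y
  rcases hdvd m with ⟨j, hj⟩ | ⟨z, hz⟩
  · rw [hj, hpow]
  · have hc : (z * x ^ n) * x ^ m = x ^ m := by
      have e : z * x ^ n * x ^ m = y * x ^ n := by
        rw [hz]; rw [mul_assoc, mul_assoc, mul_comm (x ^ n) (x ^ m)]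
      rw [e, habs]
    have h1 : f y = f (z * x ^ n) * g y := by
      calc f y = f z * f (x ^ m) := by rw [hz, map_mul]
        _ = f z * g (x ^ m) := by rw [hpow]
        _ = f z * g (x ^ n * y) := by rw [← habs, mul_comm]
        _ = f z * (g (x ^ n) * g y) := by rw [map_mul]
        _ = f z * (f (x ^ n) * g y) := by rw [hpow]
        _ = (f z * f (x ^ n)) * g y := by rw [mul_assoc]
        _ = f (z * x ^ n) * g y := by rw [map_mul]
    have h2 : g y = g (x ^ m) * g z := by
      rw [show y = x ^ m * z by rw [hz, mul_comm], map_mul]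
    calc f y = f (z * x ^ n) * (g (x ^ m) * g z) := by rw [h1, h2]
      _ = f (z * x ^ n) * (f (x ^ m) * g z) := by rw [hpow]
      _ = (f (z * x ^ n) * f (x ^ m)) * g z := by rw [mul_assoc]
      _ = f ((z * x ^ n) * x ^ m) * g z := by rw [← map_mul]
      _ = f (x ^ m) * g z := by rw [hc]
      _ = g (x ^ m) * g z := by rw [hpow]
      _ = g y := h2.symm
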